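/- Let X be a Tychonoff (completely regular Hausdorff) space, let βX be its Stone–Čech compactification (with X identified with its image), and let υX = ⋂{C : C is a cozero-set of βX containing X}. Then X is locally pseudocompact (every point of X has an open neighborhood in X with pseudocompact closure) if and only if cl_{βX}(βX \ υX) ⊆ βX \ X, i.e., cl_{βX}(βX \ υX) is disjoint from (the image of) X. -/

import Mathlib

open Set Topology

/-- An ideal in a set `X`: a nonempty collection of subsets of `X`, downward closed
and closed under finite unions. -/
def IsSetIdeal {X : Type*} (H : Set (Set X)) : Prop :=
  H.Nonempty ∧ (∀ A B : Set X, A ⊆ B → B ∈ H → A ∈ H) ∧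
    (∀ A B : Set X, A ∈ H → B ∈ H → A ∪ B ∈ H)

/-- A continuous map `f : X → [0,1]` is 2-valued modulo an ideal `H` if `f⁻¹(0) ∉ H`,
`f⁻¹(1) ∉ H`, and `X \ (f⁻¹(0) ∪ f⁻¹(1)) ∈ H`. -/
def TwoValuedMod {X : Type*} [TopologicalSpace X] (H : Set (Set X)) (f : X → ℝ) : Prop :=
  Continuous f ∧ (∀ x, f x ∈ Set.Icc (0 : ℝ) 1) ∧
    f ⁻¹' {0} ∉ H ∧ f ⁻¹' {1} ∉ H ∧ (f ⁻¹' {0} ∪ f ⁻¹' {1})ᶜ ∈ H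

/-- `X` is connected modulo the ideal `H` if there is no continuous `f : X → [0,1]`
that is 2-valued modulo `H`. -/
def ConnectedMod (X : Type*) [TopologicalSpace X] (H : Set (Set X)) : Prop :=
  ¬ ∃ f : X → ℝ, TwoValuedMod H f

/-- A subset `S` of `X` is pseudocompact if every continuous real-valued function on the
subspace `S` is bounded. -/
def IsPseudocompactSet {X : Type*} [TopologicalSpace X] (S : Set X) : Prop :=
  ∀ f : ↥S → ℝ, Continuous f → ∃ M : ℝ, ∀ y : ↥S, |f y| ≤ M

/-- The Hewitt realcompactification `υX` of `X` inside `βX`: the intersection of all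
cozero-sets of `βX` containing the image of `X`. -/
def upsilonSet (X : Type*) [TopologicalSpace X] : Set (StoneCech X) :=
  ⋂₀ {C : Set (StoneCech X) |
    (∃ g : StoneCech X → ℝ, Continuous g ∧ C = {p | g p ≠ 0}) ∧
      Set.range (stoneCechUnit : X → StoneCech X) ⊆ C}

/-- If `S` is a pseudocompact subset of `X`, then the closure in `βX` of its image is
contained in `υX`. -/
lemma aux_closure_subset_upsilon {X : Type*} [TopologicalSpace X] {S : Set X}
    (hne : S.Nonempty) (hpc : IsPseudocompactSet S) :
    closure (stoneCechUnit '' S) ⊆ upsilonSet X := by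
  intro w hw
  rw [upsilonSet, mem_sInter]
  rintro C ⟨⟨G, hGc, rfl⟩, hCX⟩
  have hGne : ∀ y : ↥S, G (stoneCechUnit (y : X)) ≠ 0 := fun y =>
    hCX ⟨(y : X), rfl⟩
  set F : ↥S → ℝ := fun y => |G (stoneCechUnit (y : X))|⁻¹ with hF
  have hFc : Continuous F := by
    apply Continuous.inv₀
    · exact (hGc.comp (continuous_stoneCechUnit.comp continuous_subtype_val)).abs
    · intro y
      simpa using hGne y
  obtain ⟨M, hM⟩ := hpc F hFc
  obtain ⟨x0, hx0⟩ := hne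
  have hMpos : 0 < M := by
    have h1 : 0 < F ⟨x0, hx0⟩ := by
      have := hGne ⟨x0, hx0⟩
      positivity
    have := hM ⟨x0, hx0⟩
    calc (0:ℝ) < F ⟨x0, hx0⟩ := h1
      _ ≤ |F ⟨x0, hx0⟩| := le_abs_self _
      _ ≤ M := this
  have key : closure (stoneCechUnit '' S) ⊆ {p | M⁻¹ ≤ |G p|} := by
    apply closure_minimal
    · rintro _ ⟨y, hy, rfl⟩
      have h1 : F ⟨y, hy⟩ ≤ M := (le_abs_self _).trans (hM ⟨y, hy⟩)
      have h2 : 0 < |G (stoneCechUnit y)| := abs_pos.2 (hGne ⟨y, hy⟩)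
      exact (inv_le_comm₀ h2 hMpos).1 h1
    · exact IsClosed.preimage hGc.abs isClosed_Ici
  have hkey := key hw
  simp only [mem_setOf_eq] at hkey ⊢
  intro h0
  rw [h0] at hkey
  simp only [abs_zero] at hkey
  exact absurd hkey (not_le.2 (by positivity))

/-- In a T3.5 space, if `x` is not in a closed set `K`, then `unit x` is not in the closure
of the image of `K` in `βX`. -/
lemma aux_not_mem_closure_image {X : Type*} [TopologicalSpace X] [T35Space X]
    {K : Set X} (hK : IsClosed K) {x : X} (hx : x ∉ K) :
    stoneCechUnit x ∉ closure (stoneCechUnit '' K) := by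
  obtain ⟨f, hfc, hfx, hfK⟩ := CompletelyRegularSpace.completely_regular x K hK hx
  set F := stoneCechExtend hfc with hFdef
  have hFe : F ∘ stoneCechUnit = f := stoneCechExtend_extends hfc
  have hcl : closure (stoneCechUnit '' K) ⊆ F ⁻¹' {1} := by
    apply closure_minimal
    · rintro _ ⟨y, hy, rfl⟩
      have : F (stoneCechUnit y) = f y := congrFun hFe y
      simp only [mem_preimage, mem_singleton_iff, this]
      exact hfK hy
    · exact IsClosed.preimage (continuous_stoneCechExtend hfc) isClosed_singleton
  intro hmem
  have h1 : F (stoneCechUnit x) = 1 := hcl hmem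
  have h0 : F (stoneCechUnit x) = 0 := by
    have : F (stoneCechUnit x) = f x := congrFun hFe x
    rw [this, hfx]
  rw [h0] at h1
  exact zero_ne_one h1

/-- If `U` is open in a T3.5 space `X` and the closure in `βX` of its image is contained in
`υX`, then `cl_X U` is pseudocompact. -/
lemma aux_pseudocompact_of_closure_subset {X : Type*} [TopologicalSpace X] [T35Space X]
    {U : Set X} (hU : IsOpen U)
    (h : closure (stoneCechUnit '' U) ⊆ upsilonSet X) :
    IsPseudocompactSet (closure U) := by
  set S := closure U with hSdef
  intro f hf
  by_contra hub
  push_neg at hub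
  have hs : ∀ n : ℕ, ∃ y : ↥S, (3 * n + 1 : ℝ) < |f y| := fun n => hub _
  choose s hsval using hs
  set φ : ↥S → ℝ := fun z => |f z| with hφ
  have hφc : Continuous φ := hf.abs
  set b : ℕ → ℝ := fun n => φ (s n) with hb
  have hbge : ∀ n : ℕ, 3 * (n : ℝ) + 1 < b n := hsval
  have hO : ∀ n : ℕ, ∃ Wn : Set X, IsOpen Wn ∧
      (Subtype.val ⁻¹' Wn : Set ↥S) = φ ⁻¹' Ioo (b n - 1) (b n + 1) :=
    fun n => isOpen_induced_iff.1 (isOpen_Ioo.preimage hφc)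
  choose W hWo hWe using hO
  have hp : ∀ n, (W n ∩ U).Nonempty := by
    intro n
    have hsW : (s n : X) ∈ W n := by
      have : s n ∈ (Subtype.val ⁻¹' W n : Set ↥S) := by
        rw [hWe n]
        simp only [mem_preimage, mem_Ioo]
        constructor <;> linarith [hbge n]
      exact this
    exact (mem_closure_iff.1 (s n).2) (W n) (hWo n) hsW
  choose p hpmem using hp
  set V : ℕ → Set X := fun n => W n ∩ U with hV
  have hVo : ∀ n, IsOpen (V n) := fun n => (hWo n).inter hU
  have hLF : LocallyFinite V := by
    intro y
    by_cases hy : y ∈ S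
    · obtain ⟨N, hNo, hNe⟩ := isOpen_induced_iff.1
        (isOpen_Iio.preimage hφc : IsOpen (φ ⁻¹' Iio (φ ⟨y, hy⟩ + 2)))
      refine ⟨N, hNo.mem_nhds ?_, ?_⟩
      · have : (⟨y, hy⟩ : ↥S) ∈ (Subtype.val ⁻¹' N : Set ↥S) := by
          rw [hNe]
          simp only [mem_preimage, mem_Iio]
          linarith
        exact this
      · apply Set.Finite.subset (Set.finite_Iio (⌈(φ ⟨y, hy⟩ + 3) / 3⌉₊))
        intro m hm
        obtain ⟨z, ⟨⟨hzW, hzU⟩, hzN⟩⟩ := hm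
        have hzS : z ∈ S := subset_closure hzU
        have h1 : (⟨z, hzS⟩ : ↥S) ∈ φ ⁻¹' Ioo (b m - 1) (b m + 1) := by
          rw [← hWe m]; exact hzW
        rw [mem_preimage, mem_Ioo] at h1
        have h2 : φ ⟨z, hzS⟩ < φ ⟨y, hy⟩ + 2 := by
          have hmem : (⟨z, hzS⟩ : ↥S) ∈ (Subtype.val ⁻¹' N : Set ↥S) := hzN
          rw [hNe] at hmem
          exact hmem
        refine Set.mem_Iio.2 (Nat.lt_ceil.2 ?_)
        have := hbge m
        have := h1.1
        linarith
    · refine ⟨Sᶜ, isClosed_closure.isOpen_compl.mem_nhds hy, ?_⟩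
      apply Set.Finite.subset Set.finite_empty
      intro m hm
      obtain ⟨z, ⟨⟨_, hzU⟩, hzc⟩⟩ := hm
      exact absurd (subset_closure hzU) hzc
  have hbump : ∀ n, ∃ g : X → unitInterval, Continuous g ∧ g (p n) = 0 ∧ EqOn g 1 (V n)ᶜ :=
    fun n => CompletelyRegularSpace.completely_regular (p n) (V n)ᶜ
      (hVo n).isClosed_compl (fun hc => hc (hpmem n))
  choose g hgc hgp hgK using hbump
  set k : ℕ → X → ℝ := fun n x => (n : ℝ) * (1 - (g n x : ℝ)) with hkdef
  have hkc : ∀ n, Continuous (k n) := fun n =>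
    continuous_const.mul (continuous_const.sub (continuous_subtype_val.comp (hgc n)))
  have hknn : ∀ n x, 0 ≤ k n x := by
    intro n x
    have h1 : (g n x : ℝ) ≤ 1 := (g n x).2.2
    exact mul_nonneg n.cast_nonneg (by linarith)
  have hksupp : ∀ n, Function.support (k n) ⊆ V n := by
    intro n x hx
    by_contra hxV
    apply hx
    have : g n x = 1 := hgK n hxV
    simp [hkdef, this]
  set u : X → ℝ := fun x => ∑ᶠ n, k n x with hudef
  have huc : Continuous u := continuous_finsum hkc (hLF.subset hksupp)
  have hunn : ∀ x, 0 ≤ u x := fun x => finsum_nonneg fun n => hknn n x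
  have hup : ∀ n : ℕ, (n : ℝ) ≤ u (p n) := by
    intro n
    have hfin : (Function.support fun m => k m (p n)).Finite := by
      apply (hLF.point_finite (p n)).subset
      intro m hm
      exact hksupp m hm
    have h1 := single_le_finsum n hfin fun m => hknn m (p n)
    have h2 : k n (p n) = n := by simp [hkdef, hgp n]
    rw [h2] at h1
    exact h1
  have hpos : ∀ x : X, (0:ℝ) < (1 + u x)⁻¹ := fun x => by
    have := hunn x; positivity
  have hle1 : ∀ x : X, (1 + u x)⁻¹ ≤ 1 := fun x => by
    have h1 : (1:ℝ) ≤ 1 + u x := by linarith [hunn x]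
    calc (1 + u x)⁻¹ ≤ 1⁻¹ := inv_anti₀ one_pos h1
      _ = 1 := inv_one
  set g0 : X → unitInterval := fun x => ⟨(1 + u x)⁻¹, le_of_lt (hpos x), hle1 x⟩ with hg0def
  have hg0c : Continuous g0 := by
    apply Continuous.subtype_mk
    exact (continuous_const.add huc).inv₀ fun x => ne_of_gt (by show (0:ℝ) < 1 + u x; linarith [hunn x])
  set G := stoneCechExtend hg0c with hGdef
  set Gr : StoneCech X → ℝ := fun q => (G q : ℝ) with hGrdef
  have hGrc : Continuous Gr := continuous_subtype_val.comp (continuous_stoneCechExtend hg0c)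
  have hGru : ∀ z : X, Gr (stoneCechUnit z) = (1 + u z)⁻¹ := by
    intro z
    have : G (stoneCechUnit z) = g0 z := congrFun (stoneCechExtend_extends hg0c) z
    rw [hGrdef]
    simp only [this, hg0def]
  have hC0 : {q : StoneCech X | Gr q ≠ 0} ∈
      {C : Set (StoneCech X) |
        (∃ gg : StoneCech X → ℝ, Continuous gg ∧ C = {p | gg p ≠ 0}) ∧
          Set.range (stoneCechUnit : X → StoneCech X) ⊆ C} := by
    constructor
    · exact ⟨Gr, hGrc, rfl⟩
    · rintro _ ⟨z, rfl⟩
      simp only [mem_setOf_eq, hGru z]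
      exact ne_of_gt (hpos z)
  set T : ℕ → Set (StoneCech X) := fun N =>
    closure ((fun n => stoneCechUnit (p n)) '' Ici N) with hTdef
  have hTne : ∀ N, (T N).Nonempty :=
    fun N => ⟨stoneCechUnit (p N), subset_closure ⟨N, le_refl N, rfl⟩⟩
  have hTd : ∀ N, T (N + 1) ⊆ T N :=
    fun N => closure_mono (image_mono (Ici_subset_Ici.2 (Nat.le_succ N)))
  obtain ⟨q, hq⟩ := IsCompact.nonempty_iInter_of_sequence_nonempty_isCompact_isClosed
    T hTd hTne (isClosed_closure.isCompact) (fun N => isClosed_closure)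
  have hqT : ∀ N, q ∈ T N := mem_iInter.1 hq
  have hGrle : ∀ N : ℕ, Gr q ≤ (1 + N : ℝ)⁻¹ := by
    intro N
    have hsub : T N ⊆ Gr ⁻¹' Iic ((1 + N : ℝ)⁻¹) := by
      apply closure_minimal
      · rintro _ ⟨n, hn, rfl⟩
        simp only [mem_preimage, mem_Iic, hGru]
        have hNn : (N : ℝ) ≤ (n : ℝ) := by exact_mod_cast hn
        have h1 : (1 + N : ℝ) ≤ 1 + u (p n) := by linarith [hup n]
        exact inv_anti₀ (by positivity) h1
      · exact IsClosed.preimage hGrc isClosed_Iic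
    exact hsub (hqT N)
  have hGr0 : Gr q = 0 := by
    have hge : 0 ≤ Gr q := (G q).2.1
    have hle : Gr q ≤ 0 := by
      by_contra hpos'
      push_neg at hpos'
      obtain ⟨N, hN⟩ := exists_nat_gt (Gr q)⁻¹
      have h1 : (1 + N : ℝ)⁻¹ < Gr q := by
        have h2 : (Gr q)⁻¹ < 1 + N := by linarith
        calc (1 + N : ℝ)⁻¹ < ((Gr q)⁻¹)⁻¹ := inv_strictAnti₀ (by positivity) h2
          _ = Gr q := inv_inv _
      exact absurd (hGrle N) (not_le.2 h1)
    linarith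
  have hqups : q ∈ upsilonSet X := by
    apply h
    have hT0 : T 0 ⊆ closure (stoneCechUnit '' U) := by
      apply closure_minimal
      · rintro _ ⟨n, _, rfl⟩
        exact subset_closure ⟨p n, (hpmem n).2, rfl⟩
      · exact isClosed_closure
    exact hT0 (hqT 0)
  exact (mem_sInter.1 hqups) _ hC0 hGr0

/-- A Tychonoff space `X` is locally pseudocompact iff `cl_{βX}(βX \ υX) ⊆ βX \ X`. -/
theorem locallyPseudocompact_iff {X : Type*} [TopologicalSpace X] [T35Space X] :
    (∀ x : X, ∃ U : Set X, IsOpen U ∧ x ∈ U ∧ IsPseudocompactSet (closure U)) ↔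
      closure ((upsilonSet X)ᶜ) ⊆ (Set.range (stoneCechUnit : X → StoneCech X))ᶜ := by
  constructor
  · intro h
    intro w hw
    rintro ⟨x, rfl⟩
    obtain ⟨U, hUo, hxU, hpc⟩ := h x
    set Wo : Set (StoneCech X) := (closure (stoneCechUnit '' Uᶜ))ᶜ with hWodef
    have hWoopen : IsOpen Wo := isClosed_closure.isOpen_compl
    have hxWo : stoneCechUnit x ∈ Wo :=
      aux_not_mem_closure_image hUo.isClosed_compl (fun hc => hc hxU)
    -- Wo ⊆ closure (unit '' closure U)
    have hWosub : Wo ⊆ closure (stoneCechUnit '' closure U) := by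
      intro w' hw'
      rw [mem_closure_iff]
      intro O hOo hw'O
      obtain ⟨z, hz⟩ := denseRange_stoneCechUnit.exists_mem_open (hOo.inter hWoopen)
        ⟨w', hw'O, hw'⟩
      have hzU : z ∈ U := by
        by_contra hzU
        exact hz.2 (subset_closure ⟨z, hzU, rfl⟩)
      exact ⟨stoneCechUnit z, hz.1, ⟨z, subset_closure hzU, rfl⟩⟩
    have hsub : Wo ⊆ upsilonSet X :=
      hWosub.trans (aux_closure_subset_upsilon ⟨x, subset_closure hxU⟩ hpc)
    -- conclude
    obtain ⟨v, hv1, hv2⟩ := (mem_closure_iff.1 hw) Wo hWoopen hxWo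
    exact hv2 (hsub hv1)
  · intro h x
    have hx : stoneCechUnit x ∉ closure ((upsilonSet X)ᶜ) := by
      intro hc
      exact h hc ⟨x, rfl⟩
    rw [mem_closure_iff] at hx
    push_neg at hx
    obtain ⟨O, hOo, hxO, hOempty⟩ := hx
    have hOsub : O ⊆ upsilonSet X := by
      intro o o_mem
      by_contra hoc
      have : o ∈ O ∩ (upsilonSet X)ᶜ := ⟨o_mem, hoc⟩
      rw [hOempty] at this
      exact this
    obtain ⟨C, hCnhds, hCclosed, hCsub⟩ :=
      exists_mem_nhds_isClosed_subset (hOo.mem_nhds hxO)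
    refine ⟨stoneCechUnit ⁻¹' (interior C), continuous_stoneCechUnit.isOpen_preimage _ isOpen_interior, ?_, ?_⟩
    · exact mem_preimage.2 (mem_interior_iff_mem_nhds.2 hCnhds)
    · apply aux_pseudocompact_of_closure_subset
        (continuous_stoneCechUnit.isOpen_preimage _ isOpen_interior)
      have h1 : stoneCechUnit '' (stoneCechUnit ⁻¹' (interior C)) ⊆ interior C :=
        image_preimage_subset _ _
      calc closure (stoneCechUnit '' (stoneCechUnit ⁻¹' (interior C)))
          ⊆ closure (interior C) := closure_mono h1
        _ ⊆ closure C := closure_mono interior_subset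
        _ = C := hCclosed.closure_eq
        _ ⊆ O := hCsub
        _ ⊆ upsilonSet X := hOsub
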